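/- Let p : A → X be an upper semicontinuous bundle of C*-algebras over a locally compact Hausdorff space X, and let (u_n) be an approximate identity of the section C*-algebra C_0(X; A). Then for each x ∈ X, the sequence (u_n(x)) is an approximate identity of the fiber C*-algebra A_x. -/

import Mathlib

open Filter Topology

lemma map_nonneg_aux {R S : Type*} [NonUnitalCStarAlgebra R] [PartialOrder R]
    [StarOrderedRing R] [NonUnitalCStarAlgebra S] [PartialOrder S] [StarOrderedRing S]
    (φ : R →⋆ₙₐ[ℂ] S) {a : R} (ha : 0 ≤ a) : 0 ≤ φ a := by
  rw [StarOrderedRing.nonneg_iff] at ha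
  induction ha using AddSubmonoid.closure_induction with
  | mem y hy =>
      obtain ⟨s, rfl⟩ := hy
      rw [map_mul, map_star]
      exact star_mul_self_nonneg _
  | zero => simp
  | add y z _ _ hy hz => rw [map_add]; exact add_nonneg hy hz

theorem stmt_10 {X : Type*} [TopologicalSpace X] [T2Space X] [LocallyCompactSpace X]
    (A : X → Type*) [∀ x, NonUnitalCStarAlgebra (A x)]
    [∀ x, PartialOrder (A x)] [∀ x, StarOrderedRing (A x)]
    {B : Type*} [NonUnitalCStarAlgebra B] [PartialOrder B] [StarOrderedRing B]
    (ev : ∀ x, B →⋆ₙₐ[ℂ] A x)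
    (h_sections : ∀ x, Function.Surjective (ev x))
    (h_norm : ∀ b : B, ‖b‖ = ⨆ x, ‖ev x b‖)
    (u : ℕ → B)
    (hpos : ∀ n, 0 ≤ u n) (hball : ∀ n, ‖u n‖ ≤ 1) (hmono : Monotone u)
    (happrox : ∀ b : B, Tendsto (fun n => b * u n) atTop (nhds b) ∧
      Tendsto (fun n => u n * b) atTop (nhds b)) :
    ∀ x : X,
      (∀ n, 0 ≤ ev x (u n)) ∧ (∀ n, ‖ev x (u n)‖ ≤ 1) ∧
      Monotone (fun n => ev x (u n)) ∧
      (∀ a : A x, Tendsto (fun n => a * ev x (u n)) atTop (nhds a) ∧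
        Tendsto (fun n => ev x (u n) * a) atTop (nhds a)) := by
  intro x
  have hcont : Continuous (ev x) :=
    AddMonoidHomClass.continuous_of_bound (ev x) 1
      (by simpa using fun b => NonUnitalStarAlgHom.norm_apply_le (ev x) b)
  refine ⟨fun n => map_nonneg_aux (ev x) (hpos n),
    fun n => (NonUnitalStarAlgHom.norm_apply_le (ev x) (u n)).trans (hball n),
    fun m n hmn => ?_, fun a => ?_⟩
  · have := hmono hmn
    have h2 : 0 ≤ ev x (u n - u m) := map_nonneg_aux (ev x) (sub_nonneg.mpr this)
    rw [map_sub, sub_nonneg] at h2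
    exact h2
  · obtain ⟨b, rfl⟩ := h_sections x a
    constructor
    · have := (hcont.tendsto b).comp (happrox b).1
      refine this.congr fun n => ?_
      simp [Function.comp, map_mul]
    · have := (hcont.tendsto b).comp (happrox b).2
      refine this.congr fun n => ?_
      simp [Function.comp, map_mul]
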